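/- Let F be a regular family of finite subsets of ℕ and 0 < θ < 1. Then Ψ is a surjective map from 𝒯^{M,(1)} onto P^M_0(F,θ) \ {0}, and for every ℓ ≥ 2, Ψ is a surjective map from 𝒯^{M,(ℓ)} onto P^M_{ℓ−1}(F,θ) \ P^M_{ℓ−2}(F,θ). Moreover, Ψ is a surjective map from 𝒯^{(1)} onto P_0(F,θ) \ {0}, and for ℓ ≥ 2, from 𝒯^{(ℓ)} onto P_{ℓ−1}(F,θ) \ P_{ℓ−2}(F,θ). -/

import Mathlib

noncomputable section

open scoped Classical

/-- `A < B` for finite sets of naturals: every element of `A` is smaller than every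
element of `B` (i.e. `max A < min B`, with the conventions `∅ < B` and `A < ∅`). -/
def finLT (A B : Finset ℕ) : Prop := ∀ a ∈ A, ∀ b ∈ B, a < b

/-- The minimum of a finite set of naturals (`0` if the set is empty; it is only ever
used for nonempty sets). -/
def sMin (A : Finset ℕ) : ℕ := sInf (A : Set ℕ)

/-- The composition `M[N]` of two families of finite subsets of `ℕ`:
all unions `F_1 ∪ ⋯ ∪ F_k` with `F_i ∈ N` nonempty, `F_1 < F_2 < ⋯ < F_k` and
`{min F_i : i = 1, …, k} ∈ M`. -/
def famComp (M N : Set (Finset ℕ)) : Set (Finset ℕ) :=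
  {A | ∃ (k : ℕ) (F : Fin k → Finset ℕ),
        (∀ i, F i ∈ N) ∧ (∀ i, (F i).Nonempty) ∧
        (∀ i j : Fin k, i < j → finLT (F i) (F j)) ∧
        (Finset.univ.image fun i => sMin (F i)) ∈ M ∧
        A = Finset.univ.biUnion F}

/-- `B` is a spread of `A`: there is an injection `f` of `A` onto `B` with `a ≤ f a`
for all `a ∈ A` (equivalently, writing `A = {a_1 < ⋯ < a_n}` and
`B = {b_1 < ⋯ < b_n}`, one has `a_i ≤ b_i` for all `i`). -/
def IsSpread (A B : Finset ℕ) : Prop :=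
  ∃ f : ℕ → ℕ, Set.InjOn f A ∧ (∀ a ∈ A, a ≤ f a) ∧ B = A.image f

/-- A family of finite subsets of `ℕ` is regular if it is hereditary, spreading, and
compact as a subset of `{0,1}^ℕ` (with the product of discrete topologies). -/
def IsRegularFam (F : Set (Finset ℕ)) : Prop :=
  (∀ A ∈ F, ∀ B ⊆ A, B ∈ F) ∧
  (∀ A ∈ F, ∀ B : Finset ℕ, IsSpread A B → B ∈ F) ∧
  IsCompact ((fun A : Finset ℕ => fun n : ℕ => decide (n ∈ A)) '' F : Set (ℕ → Bool))

/-- `t` is a terminal node of the (finite) tree `T ⊆ [[ℕ]]^{<ω}`: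
no proper extension of `t` lies in `T`. -/
def IsTerminal (T : Finset (List ℕ)) (t : List ℕ) : Prop :=
  t ∈ T ∧ ∀ u ∈ T, t <+: u → u = t

/-- The support of a node `s` in the tree `T`:
`supp(s) = {t(|t|) : t ⪰ s, t terminal in T}`. -/
def nodeSupp (T : Finset (List ℕ)) (s : List ℕ) : Set ℕ :=
  {m | ∃ t ∈ T, s <+: t ∧ IsTerminal T t ∧ t.getLast? = some m}

/-- `s ≺_lex t`: `s` and `t` are `⪯`-incomparable and `s` precedes `t`
lexicographically. -/
def LexInc (s t : List ℕ) : Prop :=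
  ¬ s <+: t ∧ ¬ t <+: s ∧ List.Lex (· < ·) s t

/-- `U < V` for sets of naturals. -/
def setLT (U V : Set ℕ) : Prop := ∀ a ∈ U, ∀ b ∈ V, a < b

/-- An `F`-allowable tree: a finite set of nonempty nondecreasing finite sequences of
naturals satisfying (T1)–(T4). -/
structure IsAllowTree (F : Set (Finset ℕ)) (T : Finset (List ℕ)) : Prop where
  /-- nodes are nonempty nondecreasing sequences -/
  nodes : ∀ t ∈ T, t ≠ [] ∧ t.Pairwise (· ≤ ·)
  /-- (T1): closed under nonempty initial segments -/
  downward : ∀ t ∈ T, ∀ s : List ℕ, s ≠ [] → s <+: t → s ∈ T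
  /-- (T2): there is a root of length 1 below every node -/
  exroot : ∃ n : ℕ, [n] ∈ T ∧ ∀ t ∈ T, [n] <+: t
  /-- (T3): a non-terminal node `t` has the successor `(t, t(|t|))`, and the set of its
  immediate-successor labels lies in `F` -/
  extend : ∀ t ∈ T, ¬ IsTerminal T t →
      (t ++ [t.getLast!]) ∈ T ∧ ∃ J : Finset ℕ, (∀ j : ℕ, j ∈ J ↔ t ++ [j] ∈ T) ∧ J ∈ F
  /-- (T4): lexicographically comparable incomparable nodes have disjoint supports -/
  suppDisj : ∀ s ∈ T, ∀ t ∈ T, LexInc s t → Disjoint (nodeSupp T s) (nodeSupp T t)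

/-- An `F`-admissible tree: an `F`-allowable tree satisfying in addition (T5). -/
def IsAdmTree (F : Set (Finset ℕ)) (T : Finset (List ℕ)) : Prop :=
  IsAllowTree F T ∧ ∀ s ∈ T, ∀ t ∈ T, LexInc s t → setLT (nodeSupp T s) (nodeSupp T t)

/-- The length `|T|` of a tree: the maximal length of its nodes. -/
def treeLen (T : Finset (List ℕ)) : ℕ := T.sup List.length

/-- `A_n = {E ⊆ ℕ : |E| ≤ n}`. -/
def Acard (n : ℕ) : Set (Finset ℕ) := {E : Finset ℕ | E.card ≤ n}

/-- Elements of `c₀₀` (and the functionals on it): finitely supported real sequences. -/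
abbrev Fn := ℕ →₀ ℝ

/-- The action `f*(x)` of a functional on a vector: `Σ_n f(n) x(n)`. -/
def pairF (f x : Fn) : ℝ := f.sum fun n a => a * x n

/-- A (finite) sequence of finite sets is `F`-admissible if the sets are nonempty,
consecutive (`E_1 < E_2 < ⋯ < E_d`) and `{min E_i : i ≤ d} ∈ F`. -/
def AdmissibleSeq (F : Set (Finset ℕ)) {d : ℕ} (E : Fin d → Finset ℕ) : Prop :=
  (∀ i, (E i).Nonempty) ∧ (∀ i j : Fin d, i < j → finLT (E i) (E j)) ∧
  (Finset.univ.image fun i => sMin (E i)) ∈ F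

/-- A (finite) sequence of finite sets is `F`-allowable if the sets are nonempty,
pairwise disjoint and `{min E_i : i ≤ d} ∈ F`. -/
def AllowableSeq (F : Set (Finset ℕ)) {d : ℕ} (E : Fin d → Finset ℕ) : Prop :=
  (∀ i, (E i).Nonempty) ∧ (∀ i j : Fin d, i ≠ j → Disjoint (E i) (E j)) ∧
  (Finset.univ.image fun i => sMin (E i)) ∈ F

/-- The sets `K_m(F, θ)` generating the norming set of the Tsirelson space `T[F, θ]`. -/
def Kn (F : Set (Finset ℕ)) (θ : ℝ) : ℕ → Set Fn
  | 0 => {f | f = 0 ∨ ∃ n : ℕ, f = Finsupp.single n 1 ∨ f = Finsupp.single n (-1)}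
  | (m + 1) => Kn F θ m ∪
      {f | ∃ (d : ℕ) (g : Fin d → Fn), (∀ i, g i ∈ Kn F θ m) ∧
            AdmissibleSeq F (fun i => (g i).support) ∧ f = θ • ∑ i, g i}

/-- The sets `K^M_m(F, θ)` generating the norming set of the modified Tsirelson space
`T_M[F, θ]`. -/
def KMn (F : Set (Finset ℕ)) (θ : ℝ) : ℕ → Set Fn
  | 0 => {f | f = 0 ∨ ∃ n : ℕ, f = Finsupp.single n 1 ∨ f = Finsupp.single n (-1)}
  | (m + 1) => KMn F θ m ∪
      {f | ∃ (d : ℕ) (g : Fin d → Fn), (∀ i, g i ∈ KMn F θ m) ∧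
            AllowableSeq F (fun i => (g i).support) ∧ f = θ • ∑ i, g i}

/-- The norming set `K(F, θ) = ⋃_m K_m(F, θ)` of `T[F, θ]`. -/
def Kfull (F : Set (Finset ℕ)) (θ : ℝ) : Set Fn := ⋃ m : ℕ, Kn F θ m

/-- The norming set `K^M(F, θ) = ⋃_m K^M_m(F, θ)` of `T_M[F, θ]`. -/
def KMfull (F : Set (Finset ℕ)) (θ : ℝ) : Set Fn := ⋃ m : ℕ, KMn F θ m

/-- The Tsirelson norm `‖x‖_{F,θ} = sup {f*(x) : f* ∈ K(F,θ)}`. -/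
noncomputable def tnorm (F : Set (Finset ℕ)) (θ : ℝ) (x : Fn) : ℝ :=
  sSup {r : ℝ | ∃ f ∈ Kfull F θ, r = pairF f x}

/-- The modified Tsirelson norm `‖x‖_{F,θ,M} = sup {f*(x) : f* ∈ K^M(F,θ)}`. -/
noncomputable def tnormM (F : Set (Finset ℕ)) (θ : ℝ) (x : Fn) : ℝ :=
  sSup {r : ℝ | ∃ f ∈ KMfull F θ, r = pairF f x}

/-- `P_m(F, θ)`: the elements of `K_m(F, θ)` with nonnegative coefficients. -/
def Pn (F : Set (Finset ℕ)) (θ : ℝ) (m : ℕ) : Set Fn :=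
  {f | f ∈ Kn F θ m ∧ ∀ n : ℕ, 0 ≤ f n}

/-- `P^M_m(F, θ)`: the elements of `K^M_m(F, θ)` with nonnegative coefficients. -/
def PMn (F : Set (Finset ℕ)) (θ : ℝ) (m : ℕ) : Set Fn :=
  {f | f ∈ KMn F θ m ∧ ∀ n : ℕ, 0 ≤ f n}

/-- `1*_A = Σ_{s ∈ A} e*_s`. -/
def oneStar (A : Finset ℕ) : Fn := ∑ s ∈ A, Finsupp.single s (1 : ℝ)

/-- `{t(j) : t ∈ T terminal, |t| = j}`, the `j`-th level set of last entries of
terminal nodes of length `j`. -/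
def levelSet (T : Finset (List ℕ)) (j : ℕ) : Finset ℕ :=
  (T.filter fun t => IsTerminal T t ∧ t.length = j).image fun t => t.getLast!

/-- The functional `Ψ(T)` associated to a tree `T`:  `Ψ(T) = e*_n` if `T = {(n)}` and
`Ψ(T) = Σ_{j=2}^{ℓ} θ^{j-1} 1*_{{t(j) : t ∈ T terminal, |t| = j}}` if `|T| = ℓ ≥ 2`
(the single formula below, starting at `j = 1`, covers both cases, since for `ℓ ≥ 2`
no terminal node has length `1`). -/
noncomputable def Psi (θ : ℝ) (T : Finset (List ℕ)) : Fn :=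
  ∑ j ∈ Finset.Icc 1 (treeLen T), θ ^ (j - 1) • oneStar (levelSet T j)

/-! ### Auxiliary lemmas -/

section Aux

variable {F : Set (Finset ℕ)} {θ : ℝ}

/-- For a nonempty list, `getLast?` is `some getLast!`. -/
lemma getLast?_eq_getLast! {l : List ℕ} (h : l ≠ []) : l.getLast? = some l.getLast! := by
  obtain ⟨a, ha⟩ := Option.isSome_iff_exists.mp (List.getLast?_isSome.mpr h)
  rw [ha, List.getLast!_of_getLast? ha]

lemma getLast!_cons' {n : ℕ} {s : List ℕ} (h : s ≠ []) : (n :: s).getLast! = s.getLast! := by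
  obtain ⟨a, ha⟩ := Option.isSome_iff_exists.mp (List.getLast?_isSome.mpr h)
  have h2 : (n :: s).getLast? = some a := by
    cases s with | nil => simp at h | cons b t => rw [List.getLast?_cons_cons, ha]
  rw [List.getLast!_of_getLast? h2, List.getLast!_of_getLast? ha]

lemma getLast!_concat' (l : List ℕ) (a : ℕ) : (l ++ [a]).getLast! = a :=
  List.getLast!_of_getLast? (List.getLast?_concat (l := l) (a := a))

lemma single_prefix_eq {a b : ℕ} {l : List ℕ} (h : [a] <+: l) (h' : [b] <+: l) : a = b := by
  obtain ⟨u, rfl⟩ := h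
  obtain ⟨v, hv⟩ := h'
  simpa using congrArg List.head? hv.symm

lemma eq_cons_tail_of_prefix {n : ℕ} {t : List ℕ} (h : [n] <+: t) : t = n :: t.tail := by
  obtain ⟨u, rfl⟩ := h; rfl

lemma single_prefix_iff {n : ℕ} {t : List ℕ} : [n] <+: t ↔ ∃ s, t = n :: s := by
  constructor
  · exact fun h => ⟨t.tail, eq_cons_tail_of_prefix h⟩
  · rintro ⟨s, rfl⟩; exact ⟨s, rfl⟩

lemma lex_cons_iff {a : ℕ} {l m : List ℕ} :
    List.Lex (·<·) (a :: l) (a :: m) ↔ List.Lex (·<·) l m := by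
  constructor
  · intro h
    cases h with
    | rel h => exact absurd h (lt_irrefl a)
    | cons h => exact h
  · exact List.Lex.cons

lemma lex_cons_cases {a b : ℕ} {l m : List ℕ} (h : List.Lex (·<·) (a :: l) (b :: m)) :
    a < b ∨ (a = b ∧ List.Lex (·<·) l m) := by
  cases h with
  | rel h => exact Or.inl h
  | cons h => exact Or.inr ⟨rfl, h⟩

lemma lexInc_cons_iff {n : ℕ} {s t : List ℕ} : LexInc (n :: s) (n :: t) ↔ LexInc s t := by
  unfold LexInc
  simp only [List.cons_prefix_cons, true_and, lex_cons_iff]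

lemma lex_total' {s t : List ℕ} (h1 : ¬ s <+: t) (h2 : ¬ t <+: s) :
    List.Lex (·<·) s t ∨ List.Lex (·<·) t s := by
  induction s generalizing t with
  | nil => exact absurd (List.nil_prefix) h1
  | cons a s ih =>
    cases t with
    | nil => exact absurd (List.nil_prefix) h2
    | cons b t =>
      rcases lt_trichotomy a b with h | rfl | h
      · exact Or.inl (List.Lex.rel h)
      · rcases ih (fun hp => h1 (List.cons_prefix_cons.mpr ⟨rfl, hp⟩))
          (fun hp => h2 (List.cons_prefix_cons.mpr ⟨rfl, hp⟩)) with h | h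
        · exact Or.inl (List.Lex.cons h)
        · exact Or.inr (List.Lex.cons h)
      · exact Or.inr (List.Lex.rel h)

lemma lexInc_total {s t : List ℕ} (h1 : ¬ s <+: t) (h2 : ¬ t <+: s) :
    LexInc s t ∨ LexInc t s := by
  rcases lex_total' h1 h2 with h | h
  · exact Or.inl ⟨h1, h2, h⟩
  · exact Or.inr ⟨h2, h1, h⟩

lemma sorted_le_getLast {l : List ℕ} (hs : l.Pairwise (· ≤ ·)) {a : ℕ} (ha : a ∈ l)
    (h : l ≠ []) : a ≤ l.getLast! := by
  rw [List.getLast!_of_getLast? (List.getLast?_eq_getLast h)]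
  obtain ⟨⟨i, hi⟩, rfl⟩ := List.mem_iff_get.mp ha
  rw [List.getLast_eq_getElem]
  exact hs.rel_get_of_le (by simp; omega)

/-! ### Tree basics -/

lemma tree_nonempty {T : Finset (List ℕ)} (hT : IsAllowTree F T) : T.Nonempty := by
  obtain ⟨n, hn, -⟩ := hT.exroot; exact ⟨[n], hn⟩

lemma mem_length_le_treeLen {T : Finset (List ℕ)} {t : List ℕ} (ht : t ∈ T) :
    t.length ≤ treeLen T := Finset.le_sup ht

lemma treeLen_pos {T : Finset (List ℕ)} (hT : IsAllowTree F T) : 1 ≤ treeLen T := by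
  obtain ⟨n, hn, -⟩ := hT.exroot
  simpa using mem_length_le_treeLen hn

lemma terminal_of_maxlen {T : Finset (List ℕ)} {t : List ℕ} (ht : t ∈ T)
    (hl : t.length = treeLen T) : IsTerminal T t := by
  refine ⟨ht, fun u hu hpre => ?_⟩
  exact (List.IsPrefix.eq_of_length_le hpre (hl ▸ mem_length_le_treeLen hu)).symm

lemma exists_maxlen_terminal {T : Finset (List ℕ)} (hT : IsAllowTree F T) :
    ∃ t ∈ T, IsTerminal T t ∧ t.length = treeLen T := by
  obtain ⟨t, ht, hl⟩ := Finset.exists_mem_eq_sup T (tree_nonempty hT) List.length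
  exact ⟨t, ht, terminal_of_maxlen ht hl.symm, hl.symm⟩

/-- Descend along the leftmost branch: above every node there is a terminal node with
the same last entry. -/
lemma exists_terminal_same_last {T : Finset (List ℕ)} (hT : IsAllowTree F T) :
    ∀ t ∈ T, ∃ u ∈ T, t <+: u ∧ IsTerminal T u ∧ u.getLast! = t.getLast! := by
  have H : ∀ k : ℕ, ∀ t ∈ T, treeLen T - t.length ≤ k →
      ∃ u ∈ T, t <+: u ∧ IsTerminal T u ∧ u.getLast! = t.getLast! := by
    intro k
    induction k with
    | zero =>
      intro t ht hk
      have hlen : t.length = treeLen T :=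
        le_antisymm (mem_length_le_treeLen ht) (by omega)
      exact ⟨t, ht, List.prefix_refl t, terminal_of_maxlen ht hlen, rfl⟩
    | succ k ih =>
      intro t ht hk
      by_cases hterm : IsTerminal T t
      · exact ⟨t, ht, List.prefix_refl t, hterm, rfl⟩
      · obtain ⟨ht', -⟩ := hT.extend t ht hterm
        have hlen' : (t ++ [t.getLast!]).length ≤ treeLen T := mem_length_le_treeLen ht'
        obtain ⟨u, hu, hpre, huterm, hulast⟩ := ih (t ++ [t.getLast!]) ht'
          (by simp at hlen' ⊢; omega)
        exact ⟨u, hu, (List.prefix_append t [t.getLast!]).trans hpre, huterm,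
          by rw [hulast, getLast!_concat']⟩
  intro t ht
  exact H (treeLen T - t.length) t ht le_rfl

lemma terminal_not_prefix {T : Finset (List ℕ)} {t u : List ℕ} (ht : IsTerminal T t)
    (hu : u ∈ T) (hne : t ≠ u) : ¬ t <+: u := fun hp => hne (ht.2 u hu hp).symm

lemma getLast!_mem_nodeSupp {T : Finset (List ℕ)} (hT : IsAllowTree F T) {t : List ℕ}
    (ht : t ∈ T) : t.getLast! ∈ nodeSupp T t := by
  obtain ⟨u, hu, hpre, huterm, hulast⟩ := exists_terminal_same_last hT t ht
  have hune : u ≠ [] := (hT.nodes u hu).1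
  exact ⟨u, hu, hpre, huterm, by rw [getLast?_eq_getLast! hune, hulast]⟩

/-- Distinct terminal nodes have distinct last entries. -/
lemma terminal_last_inj {T : Finset (List ℕ)} (hT : IsAllowTree F T) {t u : List ℕ}
    (ht : IsTerminal T t) (hu : IsTerminal T u) (h : t.getLast! = u.getLast!) : t = u := by
  by_contra hne
  have h1 : ¬ t <+: u := terminal_not_prefix ht hu.1 hne
  have h2 : ¬ u <+: t := terminal_not_prefix hu ht.1 (Ne.symm hne)
  have hmem_t : t.getLast! ∈ nodeSupp T t := getLast!_mem_nodeSupp hT ht.1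
  have hmem_u : t.getLast! ∈ nodeSupp T u := h ▸ getLast!_mem_nodeSupp hT hu.1
  rcases lexInc_total h1 h2 with hl | hl
  · exact (hT.suppDisj t ht.1 u hu.1 hl).le_bot ⟨hmem_t, hmem_u⟩ 
  · exact (hT.suppDisj u hu.1 t ht.1 hl).le_bot ⟨hmem_u, hmem_t⟩ 

lemma nodeSupp_mono {T : Finset (List ℕ)} {s t : List ℕ} (h : s <+: t) :
    nodeSupp T t ⊆ nodeSupp T s := by
  rintro m ⟨u, hu, hpre, hterm, hlast⟩
  exact ⟨u, hu, h.trans hpre, hterm, hlast⟩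

lemma nodeSupp_lower {T : Finset (List ℕ)} (hT : IsAllowTree F T) {t : List ℕ} {a m : ℕ}
    (ha : a ∈ t) (hm : m ∈ nodeSupp T t) : a ≤ m := by
  obtain ⟨u, hu, hpre, hterm, hlast⟩ := hm
  have hune : u ≠ [] := (hT.nodes u hu).1
  have hlast' : u.getLast! = m := by
    rw [getLast?_eq_getLast! hune] at hlast; exact Option.some_injective _ hlast
  rw [← hlast']
  exact sorted_le_getLast (hT.nodes u hu).2 (hpre.subset ha) hune

end Aux
section Aux2

variable {F : Set (Finset ℕ)} {θ : ℝ}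

lemma oneStar_apply (A : Finset ℕ) (n : ℕ) : oneStar A n = if n ∈ A then 1 else 0 := by
  rw [oneStar, Finsupp.finset_sum_apply]
  simp only [Finsupp.single_apply]
  rw [Finset.sum_ite_eq' A n (fun _ => (1:ℝ))]

lemma mem_levelSet {T : Finset (List ℕ)} {j n : ℕ} :
    n ∈ levelSet T j ↔ ∃ t ∈ T, IsTerminal T t ∧ t.length = j ∧ t.getLast! = n := by
  simp only [levelSet, Finset.mem_image, Finset.mem_filter]
  constructor
  · rintro ⟨t, ⟨ht, h1, h2⟩, h3⟩; exact ⟨t, ht, h1, h2, h3⟩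
  · rintro ⟨t, ht, h1, h2, h3⟩; exact ⟨t, ⟨ht, h1, h2⟩, h3⟩

lemma Psi_apply (T : Finset (List ℕ)) (n : ℕ) :
    Psi θ T n = ∑ j ∈ Finset.Icc 1 (treeLen T),
      θ ^ (j - 1) * (if n ∈ levelSet T j then 1 else 0) := by
  rw [Psi, Finsupp.finset_sum_apply]
  refine Finset.sum_congr rfl fun j _ => ?_
  rw [Finsupp.smul_apply, oneStar_apply, smul_eq_mul]

lemma psi_apply_terminal {T : Finset (List ℕ)} (hT : IsAllowTree F T) {t : List ℕ}
    (ht : IsTerminal T t) : Psi θ T t.getLast! = θ ^ (t.length - 1) := by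
  rw [Psi_apply]
  have htne : t ≠ [] := (hT.nodes t ht.1).1
  have hmem : t.length ∈ Finset.Icc 1 (treeLen T) := by
    rw [Finset.mem_Icc]
    exact ⟨List.length_pos_iff.mpr htne, mem_length_le_treeLen ht.1⟩
  rw [Finset.sum_eq_single t.length]
  · rw [if_pos (mem_levelSet.mpr ⟨t, ht.1, ht, rfl, rfl⟩), mul_one]
  · intro j _ hj
    rw [if_neg, mul_zero]
    rintro hmem'
    obtain ⟨u, -, huterm, hulen, hulast⟩ := mem_levelSet.mp hmem'
    exact hj (hulen ▸ congrArg List.length (terminal_last_inj hT ht huterm hulast.symm) : t.length = j).symm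
  · exact fun h => absurd hmem h

lemma psi_apply_of_forall {T : Finset (List ℕ)} {n : ℕ}
    (h : ∀ t, IsTerminal T t → t.getLast! ≠ n) : Psi θ T n = 0 := by
  rw [Psi_apply]
  refine Finset.sum_eq_zero fun j _ => ?_
  rw [if_neg, mul_zero]
  rintro hmem
  obtain ⟨t, -, hterm, -, hlast⟩ := mem_levelSet.mp hmem
  exact h t hterm hlast

lemma psi_nonneg (hθ : 0 ≤ θ) (T : Finset (List ℕ)) (n : ℕ) : 0 ≤ Psi θ T n := by
  rw [Psi_apply]
  refine Finset.sum_nonneg fun j _ => ?_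
  have := pow_nonneg hθ (j - 1)
  split_ifs <;> nlinarith

lemma psi_ne_zero_iff (hθ0 : 0 < θ) {T : Finset (List ℕ)} (hT : IsAllowTree F T) (n : ℕ) :
    Psi θ T n ≠ 0 ↔ ∃ t, IsTerminal T t ∧ t.getLast! = n := by
  constructor
  · intro h
    by_contra hc
    push_neg at hc
    exact h (psi_apply_of_forall hc)
  · rintro ⟨t, hterm, rfl⟩
    rw [psi_apply_terminal hT hterm]
    exact pow_ne_zero _ (ne_of_gt hθ0)

lemma mem_psi_support_iff (hθ0 : 0 < θ) {T : Finset (List ℕ)} (hT : IsAllowTree F T)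
    {n : ℕ} : n ∈ (Psi θ T).support ↔ ∃ t, IsTerminal T t ∧ t.getLast! = n := by
  rw [Finsupp.mem_support_iff, psi_ne_zero_iff hθ0 hT]

/-- The support of `Ψ(T)` is the root support of `T`. -/
lemma psi_support_eq_nodeSupp (hθ0 : 0 < θ) {T : Finset (List ℕ)} (hT : IsAllowTree F T)
    {n : ℕ} (hroot : ∀ t ∈ T, [n] <+: t) :
    ((Psi θ T).support : Set ℕ) = nodeSupp T [n] := by
  ext m
  rw [Finset.mem_coe, mem_psi_support_iff hθ0 hT]
  constructor
  · rintro ⟨t, hterm, rfl⟩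
    have htne : t ≠ [] := (hT.nodes t hterm.1).1
    exact ⟨t, hterm.1, hroot t hterm.1, hterm, getLast?_eq_getLast! htne⟩
  · rintro ⟨t, ht, -, hterm, hlast⟩
    have htne : t ≠ [] := (hT.nodes t ht).1
    rw [getLast?_eq_getLast! htne] at hlast
    exact ⟨t, hterm, Option.some_injective _ hlast⟩

/-- The root is the minimum of the support of `Ψ(T)`. -/
lemma sMin_psi_support (hθ0 : 0 < θ) {T : Finset (List ℕ)} (hT : IsAllowTree F T)
    {n : ℕ} (hnT : [n] ∈ T) (hroot : ∀ t ∈ T, [n] <+: t) :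
    sMin (Psi θ T).support = n := by
  have hsupp := psi_support_eq_nodeSupp hθ0 hT hroot
  have hn : n ∈ (Psi θ T).support := by
    rw [← Finset.mem_coe, hsupp]
    have := getLast!_mem_nodeSupp hT hnT
    simpa using this
  refine le_antisymm (Nat.sInf_le hn) (le_csInf ⟨n, hn⟩ ?_)
  rintro m hm
  exact nodeSupp_lower hT (by simp) (hsupp ▸ hm)

/-- A tree of length 1 is a singleton root. -/
lemma tree_eq_singleton {T : Finset (List ℕ)} (hT : IsAllowTree F T) (h1 : treeLen T = 1)
    {n : ℕ} (hroot : ∀ t ∈ T, [n] <+: t) (hnT : [n] ∈ T) : T = {[n]} := by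
  ext t
  simp only [Finset.mem_singleton]
  constructor
  · intro ht
    have := mem_length_le_treeLen ht
    rw [h1] at this
    exact ((hroot t ht).eq_of_length_le (by simpa using this)).symm
  · rintro rfl; exact hnT

lemma psi_singleton (n : ℕ) : Psi θ ({[n]} : Finset (List ℕ)) = Finsupp.single n 1 := by
  have hlen : treeLen ({[n]} : Finset (List ℕ)) = 1 := by simp [treeLen]
  have hterm : IsTerminal {[n]} [n] := ⟨by simp, fun u hu _ => by simpa using hu⟩
  have hls : levelSet ({[n]} : Finset (List ℕ)) 1 = {n} := by
    ext m
    rw [mem_levelSet]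
    have hg : ([n] : List ℕ).getLast! = n := getLast!_concat' [] n
    constructor
    · rintro ⟨t, ht, -, -, rfl⟩
      simp only [Finset.mem_singleton] at ht
      subst ht
      rw [hg]; exact Finset.mem_singleton_self n
    · rintro hm
      rw [Finset.mem_singleton] at hm
      exact ⟨[n], by simp, hterm, rfl, hm ▸ hg⟩
  rw [Psi, hlen]
  simp only [Finset.Icc_self, Finset.sum_singleton, pow_zero, one_smul, hls]
  simp [oneStar]

lemma singleton_allow (hF : IsRegularFam F) (n : ℕ) :
    IsAllowTree F ({[n]} : Finset (List ℕ)) := by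
  constructor
  · intro t ht; simp only [Finset.mem_singleton] at ht; subst ht; simp
  · intro t ht s hs hpre
    simp only [Finset.mem_singleton] at ht ⊢
    subst ht
    cases s with
    | nil => simp at hs
    | cons a u => 
      rw [List.cons_prefix_cons] at hpre
      obtain ⟨rfl, hu⟩ := hpre
      simpa using List.prefix_nil.mp hu ▸ rfl
  · exact ⟨n, by simp, fun t ht => by simp only [Finset.mem_singleton] at ht; subst ht; rfl⟩
  · intro t ht hterm
    simp only [Finset.mem_singleton] at ht; subst ht
    exact absurd ⟨by simp, fun u hu _ => by simpa using hu⟩ hterm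
  · intro s hs t ht hl
    simp only [Finset.mem_singleton] at hs ht
    subst hs; subst ht
    exact absurd hl (fun ⟨h, _, _⟩ => h (List.prefix_refl _))

lemma singleton_adm (hF : IsRegularFam F) (n : ℕ) :
    IsAdmTree F ({[n]} : Finset (List ℕ)) := by
  refine ⟨singleton_allow hF n, ?_⟩
  intro s hs t ht hl
  simp only [Finset.mem_singleton] at hs ht
  subst hs; subst ht
  exact absurd hl (fun ⟨h, _, _⟩ => h (List.prefix_refl _))

end Aux2
section Aux3

variable {F : Set (Finset ℕ)} {θ : ℝ}

lemma KMn_succ_subset (m : ℕ) : KMn F θ m ⊆ KMn F θ (m + 1) := by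
  rw [show KMn F θ (m+1) = KMn F θ m ∪ _ from rfl]
  exact Set.subset_union_left

lemma KMn_mono {m m' : ℕ} (h : m ≤ m') : KMn F θ m ⊆ KMn F θ m' := by
  induction m' with
  | zero => simpa [Nat.le_zero.mp h]
  | succ k ih =>
    rcases Nat.le_succ_iff.mp h with h' | rfl
    · exact (ih h').trans (KMn_succ_subset k)
    · rfl

lemma adm_to_allow {d : ℕ} {E : Fin d → Finset ℕ} (h : AdmissibleSeq F E) :
    AllowableSeq F E := by
  obtain ⟨h1, h2, h3⟩ := h
  refine ⟨h1, fun i j hij => ?_, h3⟩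
  rcases lt_or_gt_of_ne hij with h | h
  · exact Finset.disjoint_left.mpr fun a ha ha' => lt_irrefl a (h2 i j h a ha a ha')
  · exact Finset.disjoint_left.mpr fun a ha ha' => lt_irrefl a (h2 j i h a ha' a ha)

lemma Kn_subset_KMn (m : ℕ) : Kn F θ m ⊆ KMn F θ m := by
  induction m with
  | zero => rw [show Kn F θ 0 = KMn F θ 0 from rfl]
  | succ k ih =>
    rintro f (hf | ⟨d, g, hg, hadm, rfl⟩)
    · exact KMn_succ_subset k (ih hf)
    · exact Or.inr ⟨d, g, fun i => ih (hg i), adm_to_allow hadm, rfl⟩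

lemma Kn_succ_subset (m : ℕ) : Kn F θ m ⊆ Kn F θ (m + 1) := by
  rw [show Kn F θ (m+1) = Kn F θ m ∪ _ from rfl]
  exact Set.subset_union_left

lemma Kn_mono {m m' : ℕ} (h : m ≤ m') : Kn F θ m ⊆ Kn F θ m' := by
  induction m' with
  | zero => simpa [Nat.le_zero.mp h]
  | succ k ih =>
    rcases Nat.le_succ_iff.mp h with h' | rfl
    · exact (ih h').trans (Kn_succ_subset k)
    · rfl

lemma zero_mem_KMn (m : ℕ) : (0 : Fn) ∈ KMn F θ m :=
  KMn_mono (Nat.zero_le m) (Or.inl rfl)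

lemma zero_mem_Kn (m : ℕ) : (0 : Fn) ∈ Kn F θ m :=
  Kn_mono (Nat.zero_le m) (Or.inl rfl)

/-- Coordinates of elements of `K^M_m` are `0` or `±θ^j` with `j ≤ m`. -/
lemma KMn_coord {m : ℕ} {f : Fn} (hf : f ∈ KMn F θ m) (n : ℕ) :
    f n = 0 ∨ ∃ j ≤ m, f n = θ ^ j ∨ f n = -θ ^ j := by
  induction m generalizing f with
  | zero =>
    rcases hf with rfl | ⟨k, rfl | rfl⟩
    · exact Or.inl rfl
    · rcases eq_or_ne k n with rfl | h
      · exact Or.inr ⟨0, le_refl 0, Or.inl (by simp)⟩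
      · exact Or.inl (Finsupp.single_eq_of_ne' h)
    · rcases eq_or_ne k n with rfl | h
      · exact Or.inr ⟨0, le_refl 0, Or.inr (by simp)⟩
      · exact Or.inl (Finsupp.single_eq_of_ne' h)
  | succ k ih =>
    rcases hf with hf | ⟨d, g, hg, ⟨hne, hdisj, -⟩, rfl⟩
    · rcases ih hf with h | ⟨j, hj, h⟩
      · exact Or.inl h
      · exact Or.inr ⟨j, hj.trans (Nat.le_succ k), h⟩
    · rw [Finsupp.smul_apply, Finsupp.finset_sum_apply, smul_eq_mul]
      by_cases hmem : ∃ i, n ∈ (g i).support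
      · obtain ⟨i₀, hi₀⟩ := hmem
        rw [Finset.sum_eq_single i₀ (fun i _ hii => by
            by_contra hc
            exact (Finset.disjoint_left.mp (hdisj i i₀ hii)
              (Finsupp.mem_support_iff.mpr hc) hi₀))
          (fun h => absurd (Finset.mem_univ i₀) h)]
        rcases ih (hg i₀) with h | ⟨j, hj, h | h⟩
        · exact Or.inl (by rw [h, mul_zero])
        · exact Or.inr ⟨j + 1, by omega, Or.inl (by rw [h, pow_succ]; ring)⟩
        · exact Or.inr ⟨j + 1, by omega, Or.inr (by rw [h, pow_succ]; ring)⟩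
      · push_neg at hmem
        refine Or.inl ?_
        rw [Finset.sum_eq_zero fun i _ => Finsupp.notMem_support_iff.mp (hmem i), mul_zero]

/-- If `f` has a coordinate equal to `θ^j` with `j > m`, then `f ∉ K^M_m`. -/
lemma not_mem_KMn_of_coord (hθ0 : 0 < θ) (hθ1 : θ < 1) {m j : ℕ} (hj : m < j) {f : Fn}
    {n : ℕ} (hn : f n = θ ^ j) : f ∉ KMn F θ m := by
  intro hf
  rcases KMn_coord hf n with h | ⟨j', hj', h | h⟩
  · exact absurd (hn ▸ h) (ne_of_gt (pow_pos hθ0 j))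
  · have h2 : θ ^ j < θ ^ j' := pow_lt_pow_right_of_lt_one₀ hθ0 hθ1 (by omega)
    rw [hn] at h
    linarith
  · have h1 : (0:ℝ) < θ ^ j := pow_pos hθ0 j
    have h2 : (0:ℝ) < θ ^ j' := pow_pos hθ0 j'
    rw [hn] at h
    linarith

lemma not_mem_Kn_of_coord (hθ0 : 0 < θ) (hθ1 : θ < 1) {m j : ℕ} (hj : m < j) {f : Fn}
    {n : ℕ} (hn : f n = θ ^ j) : f ∉ Kn F θ m :=
  fun hf => not_mem_KMn_of_coord hθ0 hθ1 hj hn (Kn_subset_KMn m hf)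

end Aux3
section Aux4

variable {F : Set (Finset ℕ)} {θ : ℝ}

lemma getLast?_cons' {n : ℕ} {s : List ℕ} (h : s ≠ []) : (n :: s).getLast? = s.getLast? := by
  cases s with | nil => simp at h | cons b t => rw [List.getLast?_cons_cons]

/-- The subtree of `T` rooted at `[n, j]`, with the root entry stripped. -/
def subtree (T : Finset (List ℕ)) (n j : ℕ) : Finset (List ℕ) :=
  (T.filter fun t => [n, j] <+: t).image List.tail

lemma mem_subtree {T : Finset (List ℕ)} {n j : ℕ} (hroot : ∀ t ∈ T, [n] <+: t)
    {s : List ℕ} : s ∈ subtree T n j ↔ (n :: s) ∈ T ∧ [j] <+: s := by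
  constructor
  · rintro hs
    simp only [subtree, Finset.mem_image, Finset.mem_filter] at hs
    obtain ⟨t, ⟨ht, hpre⟩, rfl⟩ := hs
    have hform := eq_cons_tail_of_prefix (hroot t ht)
    rw [show ([n, j] : List ℕ) = n :: [j] from rfl] at hpre
    conv at hpre => rw [hform]
    rw [List.cons_prefix_cons] at hpre
    rw [← hform]
    exact ⟨ht, hpre.2⟩
  · rintro ⟨h1, h2⟩
    simp only [subtree, Finset.mem_image, Finset.mem_filter]
    exact ⟨n :: s, ⟨h1, List.cons_prefix_cons.mpr ⟨rfl, h2⟩⟩, rfl⟩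

lemma subtree_ne_nil {T : Finset (List ℕ)} {n j : ℕ} (hroot : ∀ t ∈ T, [n] <+: t)
    {s : List ℕ} (hs : s ∈ subtree T n j) : s ≠ [] := by
  obtain ⟨-, h2⟩ := (mem_subtree hroot).mp hs
  rintro rfl
  simp at h2

lemma terminal_subtree_iff {T : Finset (List ℕ)} {n j : ℕ} (hroot : ∀ t ∈ T, [n] <+: t)
    {s : List ℕ} (hs : s ∈ subtree T n j) :
    IsTerminal (subtree T n j) s ↔ IsTerminal T (n :: s) := by
  obtain ⟨h1, h2⟩ := (mem_subtree hroot).mp hs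
  constructor
  · rintro ⟨-, hmax⟩
    refine ⟨h1, fun u hu hpre => ?_⟩
    have hform := eq_cons_tail_of_prefix (hroot u hu)
    rw [hform] at hpre ⊢
    rw [List.cons_prefix_cons] at hpre
    have hmem : u.tail ∈ subtree T n j :=
      (mem_subtree hroot).mpr ⟨hform ▸ hu, h2.trans hpre.2⟩
    rw [hmax u.tail hmem hpre.2]
  · rintro ⟨-, hmax⟩
    refine ⟨hs, fun v hv hpre => ?_⟩
    obtain ⟨hv1, -⟩ := (mem_subtree hroot).mp hv
    have := hmax (n :: v) hv1 (List.cons_prefix_cons.mpr ⟨rfl, hpre⟩)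
    exact List.cons_injective.eq_iff.mp this  

lemma nodeSupp_subtree {T : Finset (List ℕ)} {n j : ℕ} (hroot : ∀ t ∈ T, [n] <+: t)
    {s : List ℕ} (hs : s ∈ subtree T n j) :
    nodeSupp (subtree T n j) s = nodeSupp T (n :: s) := by
  obtain ⟨h1, h2⟩ := (mem_subtree hroot).mp hs
  have hsne : s ≠ [] := subtree_ne_nil hroot hs
  ext m
  constructor
  · rintro ⟨u, hu, hpre, hterm, hlast⟩
    obtain ⟨hu1, -⟩ := (mem_subtree hroot).mp hu
    have hune : u ≠ [] := subtree_ne_nil hroot hu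
    exact ⟨n :: u, hu1, List.cons_prefix_cons.mpr ⟨rfl, hpre⟩,
      (terminal_subtree_iff hroot hu).mp hterm, (getLast?_cons' hune) ▸ hlast⟩
  · rintro ⟨w, hw, hpre, hterm, hlast⟩
    have hform := eq_cons_tail_of_prefix (hroot w hw)
    rw [hform] at hpre
    rw [List.cons_prefix_cons] at hpre
    have hwne : w.tail ≠ [] := fun h => hsne (List.prefix_nil.mp (h ▸ hpre.2))
    have hmem : w.tail ∈ subtree T n j :=
      (mem_subtree hroot).mpr ⟨hform ▸ hw, h2.trans hpre.2⟩
    refine ⟨w.tail, hmem, hpre.2, ?_, ?_⟩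
    · rw [terminal_subtree_iff hroot hmem, ← hform]; exact hterm
    · rw [← hlast, hform, getLast?_cons' hwne]; rfl

lemma subtree_allow {T : Finset (List ℕ)} (hT : IsAllowTree F T) {n j : ℕ}
    (hroot : ∀ t ∈ T, [n] <+: t) (hj : [n, j] ∈ T) :
    IsAllowTree F (subtree T n j) := by
  constructor
  · intro s hs
    obtain ⟨h1, -⟩ := (mem_subtree hroot).mp hs
    exact ⟨subtree_ne_nil hroot hs, (List.pairwise_cons.mp (hT.nodes _ h1).2).2⟩
  · intro t ht s hsne hpre
    obtain ⟨h1, h2⟩ := (mem_subtree hroot).mp ht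
    refine (mem_subtree hroot).mpr ⟨hT.downward _ h1 (n :: s) (by simp)
      (List.cons_prefix_cons.mpr ⟨rfl, hpre⟩), ?_⟩
    obtain ⟨t', rfl⟩ := single_prefix_iff.mp h2
    cases s with
    | nil => exact absurd rfl hsne
    | cons a s' =>
      rw [List.cons_prefix_cons] at hpre
      exact single_prefix_iff.mpr ⟨s', by rw [hpre.1]⟩
  · refine ⟨j, (mem_subtree hroot).mpr ⟨hj, List.prefix_refl _⟩, fun s hs => ?_⟩
    exact ((mem_subtree hroot).mp hs).2
  · intro s hs hterm
    obtain ⟨h1, h2⟩ := (mem_subtree hroot).mp hs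
    have hsne : s ≠ [] := subtree_ne_nil hroot hs
    have hterm' : ¬ IsTerminal T (n :: s) := fun h =>
      hterm ((terminal_subtree_iff hroot hs).mpr h)
    obtain ⟨hext, J, hJ, hJF⟩ := hT.extend (n :: s) h1 hterm'
    have hlast : (n :: s).getLast! = s.getLast! := getLast!_cons' hsne
    constructor
    · rw [hlast] at hext
      exact (mem_subtree hroot).mpr ⟨by simpa using hext, h2.trans (List.prefix_append s _)⟩
    · refine ⟨J, fun j' => ?_, hJF⟩
      rw [hJ j']
      constructor
      · intro h
        exact (mem_subtree hroot).mpr ⟨by simpa using h, h2.trans (List.prefix_append s _)⟩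
      · intro h
        obtain ⟨hh, -⟩ := (mem_subtree hroot).mp h
        simpa using hh
  · intro s hs t ht hl
    rw [nodeSupp_subtree hroot hs, nodeSupp_subtree hroot ht]
    exact hT.suppDisj _ ((mem_subtree hroot).mp hs).1 _ ((mem_subtree hroot).mp ht).1
      (lexInc_cons_iff.mpr hl)

lemma subtree_adm {T : Finset (List ℕ)} (hT : IsAdmTree F T) {n j : ℕ}
    (hroot : ∀ t ∈ T, [n] <+: t) (hj : [n, j] ∈ T) :
    IsAdmTree F (subtree T n j) := by
  refine ⟨subtree_allow hT.1 hroot hj, fun s hs t ht hl => ?_⟩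
  rw [nodeSupp_subtree hroot hs, nodeSupp_subtree hroot ht]
  exact hT.2 _ ((mem_subtree hroot).mp hs).1 _ ((mem_subtree hroot).mp ht).1
    (lexInc_cons_iff.mpr hl)

lemma treeLen_subtree_le {T : Finset (List ℕ)} {n j : ℕ} (hroot : ∀ t ∈ T, [n] <+: t)
    {m : ℕ} (hm : treeLen T ≤ m + 1) : treeLen (subtree T n j) ≤ m := by
  refine Finset.sup_le fun s hs => ?_
  have := mem_length_le_treeLen ((mem_subtree hroot).mp hs).1
  simp at this
  omega

lemma root_not_terminal {T : Finset (List ℕ)} (hT : IsAllowTree F T) {n : ℕ}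
    (hroot : ∀ t ∈ T, [n] <+: t) (h2 : 2 ≤ treeLen T) : ¬ IsTerminal T [n] := by
  rintro ⟨hmem, hmax⟩
  obtain ⟨t, ht, -, hlen⟩ := exists_maxlen_terminal hT
  have := hmax t ht (hroot t ht)
  rw [this] at hlen
  simp at hlen
  omega

lemma lexInc_pair {n j j' : ℕ} (h : j < j') : LexInc [n, j] [n, j'] := by
  refine ⟨?_, ?_, List.Lex.cons (List.Lex.rel h)⟩
  · intro hp
    have := List.IsPrefix.eq_of_length_le hp (by simp)
    simp at this; omega
  · intro hp
    have := List.IsPrefix.eq_of_length_le hp (by simp)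
    simp at this; omega

/-- Decomposition of `Ψ(T)` along the children of the root. -/
lemma psi_decomp {T : Finset (List ℕ)} (hT : IsAllowTree F T) {n : ℕ}
    (hroot : ∀ t ∈ T, [n] <+: t) (h2 : 2 ≤ treeLen T) {J : Finset ℕ}
    (hJ : ∀ j, j ∈ J ↔ [n, j] ∈ T) :
    Psi θ T = θ • ∑ j ∈ J, Psi θ (subtree T n j) := by
  ext n'
  rw [Finsupp.smul_apply, Finsupp.finset_sum_apply, smul_eq_mul]
  by_cases hex : ∃ t, IsTerminal T t ∧ t.getLast! = n'
  · obtain ⟨t, hterm, rfl⟩ := hex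
    have ht : t ∈ T := hterm.1
    obtain ⟨s, rfl⟩ := single_prefix_iff.mp (hroot t ht)
    cases s with
    | nil => exact absurd hterm (root_not_terminal hT hroot h2)
    | cons j₀ r =>
      set s : List ℕ := j₀ :: r with hs_def
      have hsne : s ≠ [] := by simp [hs_def]
      have hj₀T : [n, j₀] ∈ T := hT.downward _ ht [n, j₀] (by simp)
        (List.cons_prefix_cons.mpr ⟨rfl, single_prefix_iff.mpr ⟨r, rfl⟩⟩)
      have hj₀ : j₀ ∈ J := (hJ j₀).mpr hj₀T
      have hssub : s ∈ subtree T n j₀ :=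
        (mem_subtree hroot).mpr ⟨ht, single_prefix_iff.mpr ⟨r, rfl⟩⟩
      have hsterm : IsTerminal (subtree T n j₀) s :=
        (terminal_subtree_iff hroot hssub).mpr hterm
      have hlast : (n :: s).getLast! = s.getLast! := getLast!_cons' hsne
      rw [psi_apply_terminal hT hterm]
      rw [Finset.sum_eq_single_of_mem j₀ hj₀ (fun j hjJ hjne => ?_)]
      · rw [hlast, psi_apply_terminal (subtree_allow hT hroot hj₀T) hsterm]
        have : (n :: s).length - 1 = (s.length - 1) + 1 := by simp [hs_def]
        rw [this, pow_succ]
        ring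
      · rw [hlast]
        refine psi_apply_of_forall fun u huterm hulast => ?_
        have husub : u ∈ subtree T n j := huterm.1
        have huT : IsTerminal T (n :: u) := (terminal_subtree_iff hroot husub).mp huterm
        have hune : u ≠ [] := subtree_ne_nil hroot husub
        have : (n :: u).getLast! = (n :: s).getLast! := by
          rw [getLast!_cons' hune, hlast, hulast]
        have heq := terminal_last_inj hT huT hterm this
        have : u = s := List.cons_injective.eq_iff.mp heq
        obtain ⟨-, hju⟩ := (mem_subtree hroot).mp husub
        rw [this] at hju
        obtain ⟨w, hw⟩ := hju
        have hj0j : j = j₀ := by simpa [hs_def] using congrArg List.head? hw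
        exact hjne hj0j
  · push_neg at hex
    rw [psi_apply_of_forall hex]
    rw [Finset.sum_eq_zero fun j hjJ => ?_, mul_zero]
    refine psi_apply_of_forall fun u huterm hulast => ?_
    have husub : u ∈ subtree T n j := huterm.1
    have hune : u ≠ [] := subtree_ne_nil hroot husub
    refine hex (n :: u) ((terminal_subtree_iff hroot husub).mp huterm) ?_
    rw [getLast!_cons' hune, hulast]

end Aux4
section Aux5

variable {F : Set (Finset ℕ)} {θ : ℝ}

lemma orderIso_image (J : Finset ℕ) :
    (Finset.univ.image fun i : Fin J.card => ((J.orderIsoOfFin rfl i : ℕ))) = J := by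
  ext j
  simp only [Finset.mem_image, Finset.mem_univ, true_and]
  constructor
  · rintro ⟨i, rfl⟩; exact (J.orderIsoOfFin rfl i).2
  · intro hj
    obtain ⟨i, hi⟩ := (J.orderIsoOfFin rfl).surjective ⟨j, hj⟩
    exact ⟨i, by rw [hi]⟩

lemma orderIso_sum (J : Finset ℕ) (φ : ℕ → Fn) :
    ∑ i : Fin J.card, φ (J.orderIsoOfFin rfl i) = ∑ j ∈ J, φ j := by
  rw [← Finset.sum_coe_sort J φ]
  exact Fintype.sum_equiv (J.orderIsoOfFin rfl).toEquiv _ _ (fun i => rfl)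

/-- `Ψ(T) ∈ K^M_m` for every allowable tree of length at most `m+1`. -/
lemma psi_mem_KMn (hθ0 : 0 < θ) :
    ∀ m : ℕ, ∀ T : Finset (List ℕ), IsAllowTree F T → treeLen T ≤ m + 1 →
      Psi θ T ∈ KMn F θ m := by
  intro m
  induction m with
  | zero =>
    intro T hT hlen
    obtain ⟨n, hnT, hroot⟩ := hT.exroot
    have h1 : treeLen T = 1 := le_antisymm hlen (treeLen_pos hT)
    rw [tree_eq_singleton hT h1 hroot hnT, psi_singleton]
    exact Or.inr ⟨n, Or.inl rfl⟩
  | succ m ih =>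
    intro T hT hlen
    by_cases hlen' : treeLen T ≤ m + 1
    · exact KMn_succ_subset m (ih T hT hlen')
    · have hlen2 : 2 ≤ treeLen T := by omega
      obtain ⟨n, hnT, hroot⟩ := hT.exroot
      have hnt := root_not_terminal hT hroot hlen2
      obtain ⟨-, J, hJ, hJF⟩ := hT.extend [n] hnT hnt
      have hJ' : ∀ j, j ∈ J ↔ [n, j] ∈ T := fun j => hJ j
      set e := J.orderIsoOfFin rfl with he
      set g : Fin J.card → Fn := fun i => Psi θ (subtree T n (e i)) with hg
      have hjT : ∀ j ∈ J, [n, j] ∈ T := fun j hj => (hJ' j).mp hj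
      have hsuba : ∀ j ∈ J, IsAllowTree F (subtree T n j) :=
        fun j hj => subtree_allow hT hroot (hjT j hj)
      have hsubroot : ∀ j ∈ J, (∀ s ∈ subtree T n j, [j] <+: s) ∧ [j] ∈ subtree T n j := by
        intro j hj
        exact ⟨fun s hs => ((mem_subtree hroot).mp hs).2,
          (mem_subtree hroot).mpr ⟨hjT j hj, List.prefix_refl _⟩⟩
      have hsupp : ∀ j (hj : j ∈ J),
          ((Psi θ (subtree T n j)).support : Set ℕ) = nodeSupp T [n, j] := by
        intro j hj
        rw [psi_support_eq_nodeSupp hθ0 (hsuba j hj) (hsubroot j hj).1,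
          nodeSupp_subtree hroot (hsubroot j hj).2]
      have hmin : ∀ j (hj : j ∈ J), sMin (Psi θ (subtree T n j)).support = j :=
        fun j hj => sMin_psi_support hθ0 (hsuba j hj) (hsubroot j hj).2 (hsubroot j hj).1
      have hne : ∀ j (hj : j ∈ J), (Psi θ (subtree T n j)).support.Nonempty := by
        intro j hj
        obtain ⟨u, hu, -, huterm, hulast⟩ :=
          exists_terminal_same_last (hsuba j hj) [j] (hsubroot j hj).2
        exact ⟨u.getLast!, (mem_psi_support_iff hθ0 (hsuba j hj)).mpr ⟨u, huterm, rfl⟩⟩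
      have hdisjsupp : ∀ j ∈ J, ∀ j' ∈ J, j ≠ j' →
          Disjoint (Psi θ (subtree T n j)).support (Psi θ (subtree T n j')).support := by
        intro j hj j' hj' hne'
        rw [← Finset.disjoint_coe, hsupp j hj, hsupp j' hj']
        rcases lt_or_gt_of_ne hne' with h | h
        · exact hT.suppDisj _ (hjT j hj) _ (hjT j' hj') (lexInc_pair h)
        · exact (hT.suppDisj _ (hjT j' hj') _ (hjT j hj) (lexInc_pair h)).symm
      refine Or.inr ⟨J.card, g, ?_, ⟨?_, ?_, ?_⟩, ?_⟩
      · intro i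
        exact ih _ (hsuba _ (e i).2) (treeLen_subtree_le hroot hlen)
      · intro i
        exact hne _ (e i).2
      · intro i i' hii
        exact hdisjsupp _ (e i).2 _ (e i').2 (fun h => hii (e.injective (Subtype.ext h)))
      · have himg : (Finset.univ.image fun i => sMin ((g i).support)) = J := by
          rw [show (fun i => sMin ((g i).support)) = fun i : Fin J.card => ((e i : ℕ)) from
            funext fun i => hmin _ (e i).2]
          exact orderIso_image J
        rw [himg]
        exact hJF
      · rw [psi_decomp hT hroot hlen2 hJ']
        congr 1
        exact (orderIso_sum J (fun j => Psi θ (subtree T n j))).symm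

/-- `Ψ(T) ∈ K_m` for every admissible tree of length at most `m+1`. -/
lemma psi_mem_Kn (hθ0 : 0 < θ) :
    ∀ m : ℕ, ∀ T : Finset (List ℕ), IsAdmTree F T → treeLen T ≤ m + 1 →
      Psi θ T ∈ Kn F θ m := by
  intro m
  induction m with
  | zero =>
    intro T hT hlen
    obtain ⟨n, hnT, hroot⟩ := hT.1.exroot
    have h1 : treeLen T = 1 := le_antisymm hlen (treeLen_pos hT.1)
    rw [tree_eq_singleton hT.1 h1 hroot hnT, psi_singleton]
    exact Or.inr ⟨n, Or.inl rfl⟩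
  | succ m ih =>
    intro T hT hlen
    by_cases hlen' : treeLen T ≤ m + 1
    · exact Kn_succ_subset m (ih T hT hlen')
    · have hlen2 : 2 ≤ treeLen T := by omega
      obtain ⟨n, hnT, hroot⟩ := hT.1.exroot
      have hnt := root_not_terminal hT.1 hroot hlen2
      obtain ⟨-, J, hJ, hJF⟩ := hT.1.extend [n] hnT hnt
      have hJ' : ∀ j, j ∈ J ↔ [n, j] ∈ T := fun j => hJ j
      set e := J.orderIsoOfFin rfl with he
      set g : Fin J.card → Fn := fun i => Psi θ (subtree T n (e i)) with hg
      have hjT : ∀ j ∈ J, [n, j] ∈ T := fun j hj => (hJ' j).mp hj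
      have hsuba : ∀ j ∈ J, IsAllowTree F (subtree T n j) :=
        fun j hj => subtree_allow hT.1 hroot (hjT j hj)
      have hsubroot : ∀ j ∈ J, (∀ s ∈ subtree T n j, [j] <+: s) ∧ [j] ∈ subtree T n j := by
        intro j hj
        exact ⟨fun s hs => ((mem_subtree hroot).mp hs).2,
          (mem_subtree hroot).mpr ⟨hjT j hj, List.prefix_refl _⟩⟩
      have hsupp : ∀ j (hj : j ∈ J),
          ((Psi θ (subtree T n j)).support : Set ℕ) = nodeSupp T [n, j] := by
        intro j hj
        rw [psi_support_eq_nodeSupp hθ0 (hsuba j hj) (hsubroot j hj).1,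
          nodeSupp_subtree hroot (hsubroot j hj).2]
      have hmin : ∀ j (hj : j ∈ J), sMin (Psi θ (subtree T n j)).support = j :=
        fun j hj => sMin_psi_support hθ0 (hsuba j hj) (hsubroot j hj).2 (hsubroot j hj).1
      have hne : ∀ j (hj : j ∈ J), (Psi θ (subtree T n j)).support.Nonempty := by
        intro j hj
        obtain ⟨u, hu, -, huterm, hulast⟩ :=
          exists_terminal_same_last (hsuba j hj) [j] (hsubroot j hj).2
        exact ⟨u.getLast!, (mem_psi_support_iff hθ0 (hsuba j hj)).mpr ⟨u, huterm, rfl⟩⟩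
      have hlt : ∀ j ∈ J, ∀ j' ∈ J, j < j' →
          finLT (Psi θ (subtree T n j)).support (Psi θ (subtree T n j')).support := by
        intro j hj j' hj' hlt' a ha b hb
        have ha' : a ∈ nodeSupp T [n, j] := (hsupp j hj) ▸ (Finset.mem_coe.mpr ha)
        have hb' : b ∈ nodeSupp T [n, j'] := (hsupp j' hj') ▸ (Finset.mem_coe.mpr hb)
        exact hT.2 _ (hjT j hj) _ (hjT j' hj') (lexInc_pair hlt') a ha' b hb'
      refine Or.inr ⟨J.card, g, ?_, ⟨?_, ?_, ?_⟩, ?_⟩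
      · intro i
        exact ih _ (subtree_adm hT hroot (hjT _ (e i).2)) (treeLen_subtree_le hroot hlen)
      · intro i
        exact hne _ (e i).2
      · intro i i' hii
        exact hlt _ (e i).2 _ (e i').2 (by
          have : e i < e i' := e.lt_iff_lt.mpr hii
          exact this)
      · have himg : (Finset.univ.image fun i => sMin ((g i).support)) = J := by
          rw [show (fun i => sMin ((g i).support)) = fun i : Fin J.card => ((e i : ℕ)) from
            funext fun i => hmin _ (e i).2]
          exact orderIso_image J
        rw [himg]
        exact hJF
      · rw [psi_decomp hT.1 hroot hlen2 hJ']
        congr 1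
        exact (orderIso_sum J (fun j => Psi θ (subtree T n j))).symm

end Aux5
section Aux6

variable {F : Set (Finset ℕ)} {θ : ℝ}

/-- Grafting trees `Ts i` below a new root `n`. -/
def graft (n : ℕ) {d : ℕ} (Ts : Fin d → Finset (List ℕ)) : Finset (List ℕ) :=
  {[n]} ∪ Finset.univ.biUnion fun i => (Ts i).image (n :: ·)

lemma mem_graft {n : ℕ} {d : ℕ} {Ts : Fin d → Finset (List ℕ)} {s : List ℕ} :
    s ∈ graft n Ts ↔ s = [n] ∨ ∃ i, ∃ t ∈ Ts i, s = n :: t := by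
  simp only [graft, Finset.mem_union, Finset.mem_singleton, Finset.mem_biUnion,
    Finset.mem_univ, true_and, Finset.mem_image]
  constructor
  · rintro (rfl | ⟨i, t, ht, rfl⟩)
    · exact Or.inl rfl
    · exact Or.inr ⟨i, t, ht, rfl⟩
  · rintro (rfl | ⟨i, t, ht, rfl⟩)
    · exact Or.inl rfl
    · exact Or.inr ⟨i, t, ht, rfl⟩

variable {n : ℕ} {d : ℕ} {Ts : Fin d → Finset (List ℕ)} {r : Fin d → ℕ}

section GraftLemmas

variable (hTs : ∀ i, IsAllowTree F (Ts i)) (hrT : ∀ i, [r i] ∈ Ts i)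
  (hroots : ∀ i, ∀ t ∈ Ts i, [r i] <+: t)
  (hrinj : ∀ i i', r i = r i' → i = i')
  (hnle : ∀ i, n ≤ r i) (hnex : ∃ i, r i = n)

include hroots hrinj in
lemma graft_mem_unique {i i' : Fin d} {t : List ℕ} (h : t ∈ Ts i) (h' : t ∈ Ts i') :
    i = i' :=
  hrinj i i' (single_prefix_eq (hroots i t h) (hroots i' t h'))

include hTs in
lemma graft_node_ne_nil {i : Fin d} {t : List ℕ} (h : t ∈ Ts i) : t ≠ [] :=
  ((hTs i).nodes t h).1

include hTs in
lemma cons_mem_graft_iff {t : List ℕ} (ht : t ≠ []) :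
    (n :: t) ∈ graft n Ts ↔ ∃ i, t ∈ Ts i := by
  rw [mem_graft]
  constructor
  · rintro (h | ⟨i, u, hu, h⟩)
    · exact absurd (List.cons_injective.eq_iff.mp h :) ht
    · exact ⟨i, (List.cons_injective.eq_iff.mp h :) ▸ hu⟩
  · rintro ⟨i, hti⟩
    exact Or.inr ⟨i, t, hti, rfl⟩

include hTs hroots hrinj in
lemma terminal_graft_iff {i : Fin d} {t : List ℕ} (hti : t ∈ Ts i) :
    IsTerminal (graft n Ts) (n :: t) ↔ IsTerminal (Ts i) t := by
  have htne : t ≠ [] := graft_node_ne_nil hTs hti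
  constructor
  · rintro ⟨-, hmax⟩
    refine ⟨hti, fun u hu hpre => ?_⟩
    have : (n :: u) ∈ graft n Ts := mem_graft.mpr (Or.inr ⟨i, u, hu, rfl⟩)
    have := hmax (n :: u) this (List.cons_prefix_cons.mpr ⟨rfl, hpre⟩)
    exact List.cons_injective.eq_iff.mp this
  · rintro ⟨-, hmax⟩
    refine ⟨mem_graft.mpr (Or.inr ⟨i, t, hti, rfl⟩), fun u' hu' hpre => ?_⟩
    rcases mem_graft.mp hu' with rfl | ⟨i', u, hu, rfl⟩
    · exfalso
      have hlen := hpre.length_le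
      simp only [List.length_cons, List.length_nil] at hlen
      exact htne (List.eq_nil_of_length_eq_zero (by omega))
    · rw [List.cons_prefix_cons] at hpre
      have hii' : i = i' := hrinj i i'
        (single_prefix_eq ((hroots i t hti).trans hpre.2) (hroots i' u hu))
      rw [hmax u (hii' ▸ hu) hpre.2]

include hTs hroots hrinj in
lemma nodeSupp_graft {i : Fin d} {t : List ℕ} (hti : t ∈ Ts i) :
    nodeSupp (graft n Ts) (n :: t) = nodeSupp (Ts i) t := by
  have htne : t ≠ [] := graft_node_ne_nil hTs hti
  ext m
  constructor
  · rintro ⟨u', hu', hpre, hterm, hlast⟩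
    rcases mem_graft.mp hu' with rfl | ⟨i', u, hu, rfl⟩
    · exfalso
      have hlen := hpre.length_le
      simp only [List.length_cons, List.length_nil] at hlen
      exact htne (List.eq_nil_of_length_eq_zero (by omega))
    · rw [List.cons_prefix_cons] at hpre
      have hii' : i = i' := hrinj i i'
        (single_prefix_eq ((hroots i t hti).trans hpre.2) (hroots i' u hu))
      subst hii'
      have hune : u ≠ [] := graft_node_ne_nil hTs hu
      exact ⟨u, hu, hpre.2, (terminal_graft_iff hTs hroots hrinj hu).mp hterm,
        (getLast?_cons' hune) ▸ hlast⟩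
  · rintro ⟨u, hu, hpre, hterm, hlast⟩
    have hune : u ≠ [] := graft_node_ne_nil hTs hu
    exact ⟨n :: u, mem_graft.mpr (Or.inr ⟨i, u, hu, rfl⟩),
      List.cons_prefix_cons.mpr ⟨rfl, hpre⟩,
      (terminal_graft_iff hTs hroots hrinj hu).mpr hterm,
      by rw [getLast?_cons' hune]; exact hlast⟩

include hTs hrT hroots hrinj hnle hnex in
lemma graft_allow (himgF : (Finset.univ.image r) ∈ F)
    (hdisj : ∀ i i', i ≠ i' → Disjoint (nodeSupp (Ts i) [r i]) (nodeSupp (Ts i') [r i'])) :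
    IsAllowTree F (graft n Ts) := by
  constructor
  · intro s hs
    rcases mem_graft.mp hs with rfl | ⟨i, t, ht, rfl⟩
    · simp
    · obtain ⟨htne, hsort⟩ := (hTs i).nodes t ht
      refine ⟨by simp, List.pairwise_cons.mpr ⟨?_, hsort⟩⟩
      intro b hb
      obtain ⟨t', rfl⟩ := single_prefix_iff.mp (hroots i t ht)
      rcases List.mem_cons.mp hb with rfl | hb'
      · exact hnle i
      · exact (hnle i).trans ((List.pairwise_cons.mp hsort).1 b hb')
  · intro t' ht' s hsne hpre
    rcases mem_graft.mp ht' with rfl | ⟨i, t, ht, rfl⟩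
    · rw [List.IsPrefix.eq_of_length_le hpre (by
        cases s with | nil => exact absurd rfl hsne | cons a u => simp)]
      exact mem_graft.mpr (Or.inl rfl)
    · cases s with
      | nil => exact absurd rfl hsne
      | cons a s₂ =>
        rw [List.cons_prefix_cons] at hpre
        obtain ⟨rfl, hpre2⟩ := hpre
        cases s₂ with
        | nil => exact mem_graft.mpr (Or.inl rfl)
        | cons b s₃ =>
          have : (b :: s₃) ∈ Ts i := (hTs i).downward t ht _ (by simp) hpre2
          exact mem_graft.mpr (Or.inr ⟨i, _, this, rfl⟩)
  · refine ⟨n, mem_graft.mpr (Or.inl rfl), fun t' ht' => ?_⟩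
    rcases mem_graft.mp ht' with rfl | ⟨i, t, ht, rfl⟩
    · exact List.prefix_refl _
    · exact List.cons_prefix_cons.mpr ⟨rfl, List.nil_prefix⟩
  · intro t' ht' hterm
    rcases mem_graft.mp ht' with rfl | ⟨i, t, ht, rfl⟩
    · constructor
      · obtain ⟨i₀, hi₀⟩ := hnex
        have hg : ([n] : List ℕ).getLast! = n := getLast!_concat' [] n
        rw [hg]
        refine mem_graft.mpr (Or.inr ⟨i₀, [r i₀], hrT i₀, ?_⟩)
        rw [hi₀]
        rfl
      · refine ⟨Finset.univ.image r, fun j => ?_, himgF⟩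
        constructor
        · intro hj
          obtain ⟨i, -, rfl⟩ := Finset.mem_image.mp hj
          exact mem_graft.mpr (Or.inr ⟨i, [r i], hrT i, rfl⟩)
        · intro hj
          have : ([n] ++ [j] : List ℕ) = n :: [j] := rfl
          rw [this] at hj
          obtain ⟨i, hji⟩ := (cons_mem_graft_iff hTs (by simp)).mp hj
          obtain ⟨u, hu⟩ := hroots i [j] hji
          have : j = r i := by simpa using congrArg List.head? hu.symm
          exact Finset.mem_image.mpr ⟨i, Finset.mem_univ i, this ▸ rfl⟩
    · have htne : t ≠ [] := graft_node_ne_nil hTs ht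
      have htermi : ¬ IsTerminal (Ts i) t := fun h =>
        hterm ((terminal_graft_iff hTs hroots hrinj ht).mpr h)
      obtain ⟨hext, J, hJc, hJF⟩ := (hTs i).extend t ht htermi
      have hlast : (n :: t).getLast! = t.getLast! := getLast!_cons' htne
      constructor
      · rw [hlast]
        exact mem_graft.mpr (Or.inr ⟨i, t ++ [t.getLast!], hext, rfl⟩)
      · refine ⟨J, fun j => ?_, hJF⟩
        rw [hJc j]
        have hform : ((n :: t) ++ [j] : List ℕ) = n :: (t ++ [j]) := rfl
        constructor
        · intro h
          rw [hform]
          exact mem_graft.mpr (Or.inr ⟨i, t ++ [j], h, rfl⟩)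
        · intro h
          rw [hform] at h
          obtain ⟨i', hi'⟩ := (cons_mem_graft_iff hTs (by simp)).mp h
          have : i = i' := hrinj i i'
            (single_prefix_eq ((hroots i t ht).trans (List.prefix_append t [j]))
              (hroots i' _ hi'))
          exact this ▸ hi'
  · intro s hs t' ht' hl
    rcases mem_graft.mp hs with rfl | ⟨i, s₀, hs₀, rfl⟩
    · exact absurd ((by
        rcases mem_graft.mp ht' with rfl | ⟨i, t₀, ht₀, rfl⟩
        · exact List.prefix_refl _
        · exact List.cons_prefix_cons.mpr ⟨rfl, List.nil_prefix⟩ : [n] <+: t')) hl.1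
    · rcases mem_graft.mp ht' with rfl | ⟨i', t₀, ht₀, rfl⟩
      · exact absurd (List.cons_prefix_cons.mpr ⟨rfl, List.nil_prefix⟩ : [n] <+: _) hl.2.1
      · have hl' : LexInc s₀ t₀ := lexInc_cons_iff.mp hl
        rw [nodeSupp_graft hTs hroots hrinj hs₀, nodeSupp_graft hTs hroots hrinj ht₀]
        rcases eq_or_ne i i' with rfl | hii
        · exact (hTs i).suppDisj s₀ hs₀ t₀ ht₀ hl'
        · exact (hdisj i i' hii).mono (nodeSupp_mono (hroots i s₀ hs₀))
            (nodeSupp_mono (hroots i' t₀ ht₀))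

include hTs hroots hrinj in
lemma treeLen_graft_le {m : ℕ} (hm : ∀ i, treeLen (Ts i) ≤ m) :
    treeLen (graft n Ts) ≤ m + 1 := by
  refine Finset.sup_le fun s hs => ?_
  rcases mem_graft.mp hs with rfl | ⟨i, t, ht, rfl⟩
  · simp only [List.length_cons, List.length_nil]
    omega
  · have h1 := mem_length_le_treeLen ht
    have h2 := hm i
    simp only [List.length_cons]
    omega

include hTs hrT hroots hrinj in
lemma psi_graft (hd : 0 < d) (hgraft : IsAllowTree F (graft n Ts)) :
    Psi θ (graft n Ts) = θ • ∑ i, Psi θ (Ts i) := by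
  ext n'
  rw [Finsupp.smul_apply, Finsupp.finset_sum_apply, smul_eq_mul]
  by_cases hex : ∃ t, IsTerminal (graft n Ts) t ∧ t.getLast! = n'
  · obtain ⟨t', hterm, rfl⟩ := hex
    have hroot_not : t' ≠ [n] := by
      rintro rfl
      set i₀ : Fin d := ⟨0, hd⟩
      have hmem : (n :: [r i₀]) ∈ graft n Ts := mem_graft.mpr (Or.inr ⟨i₀, _, hrT i₀, rfl⟩)
      have := hterm.2 _ hmem (List.cons_prefix_cons.mpr ⟨rfl, List.nil_prefix⟩)
      simp at this
    rcases mem_graft.mp hterm.1 with h | ⟨i₁, u, hu, h⟩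
    · exact absurd h hroot_not
    subst h
    have hune : u ≠ [] := graft_node_ne_nil hTs hu
    have hui : IsTerminal (Ts i₁) u := (terminal_graft_iff hTs hroots hrinj hu).mp hterm
    have hlast : (n :: u).getLast! = u.getLast! := getLast!_cons' hune
    rw [psi_apply_terminal hgraft hterm, hlast]
    rw [Finset.sum_eq_single i₁ (fun i _ hii => ?_) (fun h => absurd (Finset.mem_univ i₁) h)]
    · rw [psi_apply_terminal (hTs i₁) hui]
      have h1 : (n :: u).length - 1 = (u.length - 1) + 1 := by
        cases u with | nil => exact absurd rfl hune | cons a v => simp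
      rw [h1, pow_succ]
      ring
    · refine psi_apply_of_forall fun v hvterm hvlast => ?_
      have hvi : v ∈ Ts i := hvterm.1
      have hvg : IsTerminal (graft n Ts) (n :: v) :=
        (terminal_graft_iff hTs hroots hrinj hvi).mpr hvterm
      have hvne : v ≠ [] := graft_node_ne_nil hTs hvi
      have heq : (n :: v) = (n :: u) := terminal_last_inj hgraft hvg hterm
        (by rw [getLast!_cons' hvne, hlast, hvlast])
      have : v = u := List.cons_injective.eq_iff.mp heq
      subst this
      exact hii (graft_mem_unique hroots hrinj hvi hu)
  · push_neg at hex
    rw [psi_apply_of_forall hex]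
    rw [Finset.sum_eq_zero fun i _ => ?_, mul_zero]
    refine psi_apply_of_forall fun v hvterm hvlast => ?_
    have hvne : v ≠ [] := graft_node_ne_nil hTs hvterm.1
    refine hex (n :: v) ((terminal_graft_iff hTs hroots hrinj hvterm.1).mpr hvterm) ?_
    rw [getLast!_cons' hvne, hvlast]

include hTs hrT hroots hrinj hnle hnex in
lemma graft_adm (hadm : ∀ i, IsAdmTree F (Ts i)) (himgF : (Finset.univ.image r) ∈ F)
    (hLT : ∀ i i', i < i' → setLT (nodeSupp (Ts i) [r i]) (nodeSupp (Ts i') [r i'])) :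
    IsAdmTree F (graft n Ts) := by
  have hdisj : ∀ i i', i ≠ i' →
      Disjoint (nodeSupp (Ts i) [r i]) (nodeSupp (Ts i') [r i']) := by
    intro i i' hii
    rcases lt_or_gt_of_ne hii with h | h
    · exact Set.disjoint_left.mpr fun a ha ha' => lt_irrefl a (hLT i i' h a ha a ha')
    · exact Set.disjoint_left.mpr fun a ha ha' => lt_irrefl a (hLT i' i h a ha' a ha)
  refine ⟨graft_allow hTs hrT hroots hrinj hnle hnex himgF hdisj, ?_⟩
  have hrmem : ∀ i, (r i) ∈ nodeSupp (Ts i) [r i] := by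
    intro i
    have hmem := getLast!_mem_nodeSupp (hTs i) (hrT i)
    have hg : ([r i] : List ℕ).getLast! = r i := getLast!_concat' [] (r i)
    rwa [hg] at hmem
  have hrmono : ∀ i i', i < i' → r i < r i' :=
    fun i i' h => hLT i i' h _ (hrmem i) _ (hrmem i')
  intro s hs t' ht' hl
  rcases mem_graft.mp hs with rfl | ⟨i, s₀, hs₀, rfl⟩
  · exact absurd ((by
      rcases mem_graft.mp ht' with rfl | ⟨i, t₀, ht₀, rfl⟩
      · exact List.prefix_refl _
      · exact List.cons_prefix_cons.mpr ⟨rfl, List.nil_prefix⟩ : [n] <+: t')) hl.1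
  · rcases mem_graft.mp ht' with rfl | ⟨i', t₀, ht₀, rfl⟩
    · exact absurd (List.cons_prefix_cons.mpr ⟨rfl, List.nil_prefix⟩ : [n] <+: _) hl.2.1
    · have hl' : LexInc s₀ t₀ := lexInc_cons_iff.mp hl
      rw [nodeSupp_graft hTs hroots hrinj hs₀, nodeSupp_graft hTs hroots hrinj ht₀]
      rcases eq_or_ne i i' with rfl | hii
      · exact (hadm i).2 s₀ hs₀ t₀ ht₀ hl'
      · have hii' : i < i' := by
          obtain ⟨s₁, rfl⟩ := single_prefix_iff.mp (hroots i s₀ hs₀)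
          obtain ⟨t₁, rfl⟩ := single_prefix_iff.mp (hroots i' t₀ ht₀)
          rcases lex_cons_cases hl'.2.2 with h | ⟨h, -⟩
          · by_contra hc
            push_neg at hc
            rcases lt_or_eq_of_le hc with hc' | hc'
            · exact absurd (hrmono i' i hc') (by omega)
            · exact hii (hrinj i i' (by omega)) 
          · exact absurd (hrinj i i' h) hii
        intro a ha b hb
        exact hLT i i' hii' a (nodeSupp_mono (hroots i s₀ hs₀) ha)
          b (nodeSupp_mono (hroots i' t₀ ht₀) hb)

end GraftLemmas

end Aux6
section Aux7

variable {F : Set (Finset ℕ)} {θ : ℝ}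

lemma treeLen_singleton (n : ℕ) : treeLen ({[n]} : Finset (List ℕ)) = 1 := by
  simp [treeLen]

lemma KMn_base_classify {f : Fn} (hf : f ∈ KMn F θ 0) (hpos : ∀ k, 0 ≤ f k)
    (hf0 : f ≠ 0) : ∃ k, f = Finsupp.single k 1 := by
  rcases hf with rfl | ⟨k, rfl | rfl⟩
  · exact absurd rfl hf0
  · exact ⟨k, rfl⟩
  · have := hpos k
    simp at this
    linarith

/-- Surjectivity for the modified norming sets. -/
lemma KMn_surj (hF : IsRegularFam F) (hθ0 : 0 < θ) :
    ∀ m : ℕ, ∀ f : Fn, f ∈ KMn F θ m → (∀ k, 0 ≤ f k) → f ≠ 0 →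
      ∃ T : Finset (List ℕ), IsAllowTree F T ∧ treeLen T ≤ m + 1 ∧ Psi θ T = f := by
  intro m
  induction m with
  | zero =>
    intro f hf hpos hf0
    obtain ⟨k, rfl⟩ := KMn_base_classify hf hpos hf0
    exact ⟨{[k]}, singleton_allow hF k, le_of_eq (treeLen_singleton k), psi_singleton k⟩
  | succ m ih =>
    rintro f hf hpos hf0
    rcases hf with hf | ⟨d, g, hg, ⟨hne, hdisj, hminF⟩, rfl⟩
    · obtain ⟨T, hT, hlen, hpsi⟩ := ih f hf hpos hf0
      exact ⟨T, hT, hlen.trans (by omega), hpsi⟩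
    · have hd : 0 < d := by
        rcases Nat.eq_zero_or_pos d with rfl | hd
        · exact absurd (by simp : (θ • ∑ i : Fin 0, g i) = 0) hf0
        · exact hd
      have hgpos : ∀ i, ∀ k, 0 ≤ g i k := by
        intro i k
        by_cases hk : k ∈ (g i).support
        · have hfk := hpos k
          rw [Finsupp.smul_apply, Finsupp.finset_sum_apply, smul_eq_mul] at hfk
          rw [Finset.sum_eq_single i (fun i' _ hii => by
              by_contra hc
              exact (Finset.disjoint_left.mp (hdisj i' i hii)
                (Finsupp.mem_support_iff.mpr hc) hk))
            (fun h => absurd (Finset.mem_univ i) h)] at hfk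
          by_contra hc
          push_neg at hc
          nlinarith
        · rw [Finsupp.notMem_support_iff.mp hk]
      have hgne : ∀ i, g i ≠ 0 := fun i =>
        Finsupp.support_nonempty_iff.mp (hne i)
      choose Ts hTs hlens hpsis using fun i => ih (g i) (hg i) (hgpos i) (hgne i)
      choose rr hr1 hr2 using fun i => (hTs i).exroot
      have hrmin : ∀ i, rr i = sMin (g i).support := by
        intro i
        rw [← hpsis i]
        exact (sMin_psi_support hθ0 (hTs i) (hr1 i) (hr2 i)).symm
      have hrmem : ∀ i, rr i ∈ (g i).support := by
        intro i
        rw [hrmin i]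
        exact Nat.sInf_mem (Finset.coe_nonempty.mpr (hne i))
      have hrinj : ∀ i i', rr i = rr i' → i = i' := by
        intro i i' h
        by_contra hc
        exact Finset.disjoint_left.mp (hdisj i i' hc) (hrmem i) (h ▸ hrmem i')
      set n := (Finset.univ.image rr).min' ((Finset.univ_nonempty_iff.mpr
        ⟨⟨0, hd⟩⟩).image rr) with hn
      have hnle : ∀ i, n ≤ rr i := fun i =>
        Finset.min'_le _ _ (Finset.mem_image_of_mem rr (Finset.mem_univ i))
      have hnex : ∃ i, rr i = n := by
        have := Finset.min'_mem (Finset.univ.image rr) ((Finset.univ_nonempty_iff.mpr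
          ⟨⟨0, hd⟩⟩).image rr)
        obtain ⟨i, -, hi⟩ := Finset.mem_image.mp this
        exact ⟨i, hi⟩
      have himgF : (Finset.univ.image rr) ∈ F := by
        have : rr = fun i => sMin ((g i).support) := funext hrmin
        rw [this]
        exact hminF
      have hsupps : ∀ i, nodeSupp (Ts i) [rr i] = ((g i).support : Set ℕ) := by
        intro i
        rw [← psi_support_eq_nodeSupp hθ0 (hTs i) (hr2 i), hpsis i]
      have hdisjS : ∀ i i', i ≠ i' →
          Disjoint (nodeSupp (Ts i) [rr i]) (nodeSupp (Ts i') [rr i']) := by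
        intro i i' hii
        rw [hsupps i, hsupps i']
        exact Finset.disjoint_coe.mpr (hdisj i i' hii)
      have hallow := graft_allow hTs hr1 hr2 hrinj hnle hnex himgF hdisjS
      refine ⟨graft n Ts, hallow, ?_, ?_⟩
      · exact treeLen_graft_le hTs hr2 hrinj hlens
      · rw [psi_graft hTs hr1 hr2 hrinj hd hallow]
        congr 1
        exact Finset.sum_congr rfl fun i _ => hpsis i

lemma Kn_base_classify {f : Fn} (hf : f ∈ Kn F θ 0) (hpos : ∀ k, 0 ≤ f k)
    (hf0 : f ≠ 0) : ∃ k, f = Finsupp.single k 1 := by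
  rcases hf with rfl | ⟨k, rfl | rfl⟩
  · exact absurd rfl hf0
  · exact ⟨k, rfl⟩
  · have := hpos k
    simp at this
    linarith

/-- Surjectivity for the plain norming sets, with admissible trees. -/
lemma Kn_surj (hF : IsRegularFam F) (hθ0 : 0 < θ) :
    ∀ m : ℕ, ∀ f : Fn, f ∈ Kn F θ m → (∀ k, 0 ≤ f k) → f ≠ 0 →
      ∃ T : Finset (List ℕ), IsAdmTree F T ∧ treeLen T ≤ m + 1 ∧ Psi θ T = f := by
  intro m
  induction m with
  | zero =>
    intro f hf hpos hf0
    obtain ⟨k, rfl⟩ := Kn_base_classify hf hpos hf0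
    exact ⟨{[k]}, singleton_adm hF k, le_of_eq (treeLen_singleton k), psi_singleton k⟩
  | succ m ih =>
    rintro f hf hpos hf0
    rcases hf with hf | ⟨d, g, hg, hadm, rfl⟩
    · obtain ⟨T, hT, hlen, hpsi⟩ := ih f hf hpos hf0
      exact ⟨T, hT, hlen.trans (by omega), hpsi⟩
    · obtain ⟨hne, hdisj, hminF⟩ := adm_to_allow hadm
      obtain ⟨-, hfinLT, -⟩ := hadm
      have hd : 0 < d := by
        rcases Nat.eq_zero_or_pos d with rfl | hd
        · exact absurd (by simp : (θ • ∑ i : Fin 0, g i) = 0) hf0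
        · exact hd
      have hgpos : ∀ i, ∀ k, 0 ≤ g i k := by
        intro i k
        by_cases hk : k ∈ (g i).support
        · have hfk := hpos k
          rw [Finsupp.smul_apply, Finsupp.finset_sum_apply, smul_eq_mul] at hfk
          rw [Finset.sum_eq_single i (fun i' _ hii => by
              by_contra hc
              exact (Finset.disjoint_left.mp (hdisj i' i hii)
                (Finsupp.mem_support_iff.mpr hc) hk))
            (fun h => absurd (Finset.mem_univ i) h)] at hfk
          by_contra hc
          push_neg at hc
          nlinarith
        · rw [Finsupp.notMem_support_iff.mp hk]
      have hgne : ∀ i, g i ≠ 0 := fun i =>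
        Finsupp.support_nonempty_iff.mp (hne i)
      choose Ts hTs hlens hpsis using fun i => ih (g i) (hg i) (hgpos i) (hgne i)
      choose rr hr1 hr2 using fun i => (hTs i).1.exroot
      have hTs' : ∀ i, IsAllowTree F (Ts i) := fun i => (hTs i).1
      have hrmin : ∀ i, rr i = sMin (g i).support := by
        intro i
        rw [← hpsis i]
        exact (sMin_psi_support hθ0 (hTs' i) (hr1 i) (hr2 i)).symm
      have hrmem : ∀ i, rr i ∈ (g i).support := by
        intro i
        rw [hrmin i]
        exact Nat.sInf_mem (Finset.coe_nonempty.mpr (hne i))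
      have hrinj : ∀ i i', rr i = rr i' → i = i' := by
        intro i i' h
        by_contra hc
        exact Finset.disjoint_left.mp (hdisj i i' hc) (hrmem i) (h ▸ hrmem i')
      set n := (Finset.univ.image rr).min' ((Finset.univ_nonempty_iff.mpr
        ⟨⟨0, hd⟩⟩).image rr) with hn
      have hnle : ∀ i, n ≤ rr i := fun i =>
        Finset.min'_le _ _ (Finset.mem_image_of_mem rr (Finset.mem_univ i))
      have hnex : ∃ i, rr i = n := by
        have := Finset.min'_mem (Finset.univ.image rr) ((Finset.univ_nonempty_iff.mpr
          ⟨⟨0, hd⟩⟩).image rr)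
        obtain ⟨i, -, hi⟩ := Finset.mem_image.mp this
        exact ⟨i, hi⟩
      have himgF : (Finset.univ.image rr) ∈ F := by
        have : rr = fun i => sMin ((g i).support) := funext hrmin
        rw [this]
        exact hminF
      have hsupps : ∀ i, nodeSupp (Ts i) [rr i] = ((g i).support : Set ℕ) := by
        intro i
        rw [← psi_support_eq_nodeSupp hθ0 (hTs' i) (hr2 i), hpsis i]
      have hLT : ∀ i i', i < i' →
          setLT (nodeSupp (Ts i) [rr i]) (nodeSupp (Ts i') [rr i']) := by
        intro i i' hii a ha b hb
        rw [hsupps i] at ha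
        rw [hsupps i'] at hb
        exact hfinLT i i' hii a ha b hb
      have hadmT := graft_adm hTs' hr1 hr2 hrinj hnle hnex hTs himgF hLT
      refine ⟨graft n Ts, hadmT, ?_, ?_⟩
      · exact treeLen_graft_le hTs' hr2 hrinj hlens
      · rw [psi_graft hTs' hr1 hr2 hrinj hd hadmT.1]
        congr 1
        exact Finset.sum_congr rfl fun i _ => hpsis i

end Aux7
/-- For a regular family `F` and `0 < θ < 1`, `Ψ` maps `𝒯^{M,(1)}`
onto `P^M_0 \ {0}`, and for each `ℓ ≥ 2` it maps `𝒯^{M,(ℓ)}` onto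
`P^M_{ℓ-1} \ P^M_{ℓ-2}`; moreover `Ψ` maps `𝒯^{(1)}` onto `P_0 \ {0}` and, for
`ℓ ≥ 2`, `𝒯^{(ℓ)}` onto `P_{ℓ-1} \ P_{ℓ-2}`. -/
theorem Psi_surjective (F : Set (Finset ℕ)) (hF : IsRegularFam F)
    (θ : ℝ) (hθ0 : 0 < θ) (hθ1 : θ < 1) :
    (∀ T : Finset (List ℕ), IsAllowTree F T → treeLen T = 1 →
        Psi θ T ∈ PMn F θ 0 \ {0}) ∧
    (∀ f ∈ PMn F θ 0 \ {0}, ∃ T : Finset (List ℕ),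
        IsAllowTree F T ∧ treeLen T = 1 ∧ Psi θ T = f) ∧
    (∀ ℓ : ℕ, 2 ≤ ℓ → ∀ T : Finset (List ℕ), IsAllowTree F T → treeLen T = ℓ →
        Psi θ T ∈ PMn F θ (ℓ - 1) \ PMn F θ (ℓ - 2)) ∧
    (∀ ℓ : ℕ, 2 ≤ ℓ → ∀ f ∈ PMn F θ (ℓ - 1) \ PMn F θ (ℓ - 2),
        ∃ T : Finset (List ℕ), IsAllowTree F T ∧ treeLen T = ℓ ∧ Psi θ T = f) ∧
    (∀ T : Finset (List ℕ), IsAdmTree F T → treeLen T = 1 →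
        Psi θ T ∈ Pn F θ 0 \ {0}) ∧
    (∀ f ∈ Pn F θ 0 \ {0}, ∃ T : Finset (List ℕ),
        IsAdmTree F T ∧ treeLen T = 1 ∧ Psi θ T = f) ∧
    (∀ ℓ : ℕ, 2 ≤ ℓ → ∀ T : Finset (List ℕ), IsAdmTree F T → treeLen T = ℓ →
        Psi θ T ∈ Pn F θ (ℓ - 1) \ Pn F θ (ℓ - 2)) ∧
    (∀ ℓ : ℕ, 2 ≤ ℓ → ∀ f ∈ Pn F θ (ℓ - 1) \ Pn F θ (ℓ - 2),
        ∃ T : Finset (List ℕ), IsAdmTree F T ∧ treeLen T = ℓ ∧ Psi θ T = f) := by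
  have hpsi1 : ∀ T : Finset (List ℕ), IsAllowTree F T → treeLen T = 1 →
      ∃ n, Psi θ T = Finsupp.single n 1 := by
    intro T hT h1
    obtain ⟨n, hnT, hroot⟩ := hT.exroot
    exact ⟨n, by rw [tree_eq_singleton hT h1 hroot hnT, psi_singleton]⟩
  have hexact : ∀ ℓ : ℕ, 2 ≤ ℓ → ∀ T : Finset (List ℕ), IsAllowTree F T →
      treeLen T = ℓ → ∃ k, Psi θ T k = θ ^ (ℓ - 1) := by
    intro ℓ hℓ T hT hlen
    obtain ⟨t, ht, hterm, htlen⟩ := exists_maxlen_terminal hT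
    exact ⟨t.getLast!, by rw [psi_apply_terminal hT hterm, htlen, hlen]⟩
  refine ⟨?_, ?_, ?_, ?_, ?_, ?_, ?_, ?_⟩
  -- (1) 𝒯^{M,(1)} → P^M_0 \ {0}
  · intro T hT h1
    obtain ⟨n, hn⟩ := hpsi1 T hT h1
    rw [hn]
    refine ⟨⟨Or.inr ⟨n, Or.inl rfl⟩, fun k => ?_⟩, ?_⟩
    · rw [Finsupp.single_apply]; split_ifs <;> norm_num
    · simp only [Set.mem_singleton_iff]
      intro h; exact one_ne_zero ((Finsupp.single_eq_zero).mp h)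
  -- (2) onto P^M_0 \ {0}
  · rintro f ⟨⟨hf, hpos⟩, hf0⟩
    simp only [Set.mem_singleton_iff] at hf0
    obtain ⟨k, rfl⟩ := KMn_base_classify hf hpos hf0
    exact ⟨{[k]}, singleton_allow hF k, treeLen_singleton k, psi_singleton k⟩
  -- (3) 𝒯^{M,(ℓ)} → P^M_{ℓ-1} \ P^M_{ℓ-2}
  · intro ℓ hℓ T hT hlen
    refine ⟨⟨psi_mem_KMn hθ0 (ℓ - 1) T hT (by omega), psi_nonneg hθ0.le T⟩, ?_⟩
    obtain ⟨k, hk⟩ := hexact ℓ hℓ T hT hlen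
    intro hmem
    exact not_mem_KMn_of_coord hθ0 hθ1 (show ℓ - 2 < ℓ - 1 by omega) hk hmem.1
  -- (4) onto P^M_{ℓ-1} \ P^M_{ℓ-2}
  · rintro ℓ hℓ f ⟨⟨hf, hpos⟩, hf2⟩
    have hf0 : f ≠ 0 := by
      rintro rfl
      exact hf2 ⟨zero_mem_KMn _, fun n => le_refl 0⟩
    have hfnot : f ∉ KMn F θ (ℓ - 2) := fun h => hf2 ⟨h, hpos⟩
    obtain ⟨T, hT, hlen, hpsi⟩ := KMn_surj hF hθ0 (ℓ - 1) f hf hpos hf0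
    refine ⟨T, hT, ?_, hpsi⟩
    by_contra hne
    have hlt : treeLen T < ℓ := by omega
    have h1 : 1 ≤ treeLen T := treeLen_pos hT
    have : Psi θ T ∈ KMn F θ (treeLen T - 1) :=
      psi_mem_KMn hθ0 (treeLen T - 1) T hT (by omega)
    rw [hpsi] at this
    exact hfnot (KMn_mono (by omega) this)
  -- (5) 𝒯^{(1)} → P_0 \ {0}
  · intro T hT h1
    obtain ⟨n, hn⟩ := hpsi1 T hT.1 h1
    rw [hn]
    refine ⟨⟨Or.inr ⟨n, Or.inl rfl⟩, fun k => ?_⟩, ?_⟩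
    · rw [Finsupp.single_apply]; split_ifs <;> norm_num
    · simp only [Set.mem_singleton_iff]
      intro h; exact one_ne_zero ((Finsupp.single_eq_zero).mp h)
  -- (6) onto P_0 \ {0}
  · rintro f ⟨⟨hf, hpos⟩, hf0⟩
    simp only [Set.mem_singleton_iff] at hf0
    obtain ⟨k, rfl⟩ := Kn_base_classify hf hpos hf0
    exact ⟨{[k]}, singleton_adm hF k, treeLen_singleton k, psi_singleton k⟩
  -- (7) 𝒯^{(ℓ)} → P_{ℓ-1} \ P_{ℓ-2}
  · intro ℓ hℓ T hT hlen
    refine ⟨⟨psi_mem_Kn hθ0 (ℓ - 1) T hT (by omega), psi_nonneg hθ0.le T⟩, ?_⟩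
    obtain ⟨k, hk⟩ := hexact ℓ hℓ T hT.1 hlen
    intro hmem
    exact not_mem_Kn_of_coord hθ0 hθ1 (show ℓ - 2 < ℓ - 1 by omega) hk hmem.1
  -- (8) onto P_{ℓ-1} \ P_{ℓ-2}
  · rintro ℓ hℓ f ⟨⟨hf, hpos⟩, hf2⟩
    have hf0 : f ≠ 0 := by
      rintro rfl
      exact hf2 ⟨zero_mem_Kn _, fun n => le_refl 0⟩
    have hfnot : f ∉ Kn F θ (ℓ - 2) := fun h => hf2 ⟨h, hpos⟩
    obtain ⟨T, hT, hlen, hpsi⟩ := Kn_surj hF hθ0 (ℓ - 1) f hf hpos hf0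
    refine ⟨T, hT, ?_, hpsi⟩
    by_contra hne
    have hlt : treeLen T < ℓ := by omega
    have h1 : 1 ≤ treeLen T := treeLen_pos hT.1
    have : Psi θ T ∈ Kn F θ (treeLen T - 1) :=
      psi_mem_Kn hθ0 (treeLen T - 1) T hT (by omega)
    rw [hpsi] at this
    exact hfnot (Kn_mono (by omega) this)
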